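/- Let R: ℝ × ℝ → ℝ be continuous on [0,1] × (−∞,0] and such that: for each u ∈ [0,1], the map w ↦ R(u,w) is convex and differentiable on (−∞,0]; the map u ↦ R(u,0) is strictly convex on [0,1] with R(0,0) = R(1,0) = 0; and the map χ(u) := ∂R/∂w(u,0) is convex on [0,1] with χ(0) < 0 and χ(1) < 0. Then there exists a unique function w: [0,1] → (−∞,0] such that R(u, w(u)) = 0 for every u ∈ [0,1]; moreover w is continuous, w(0) = w(1) = 0, w(u) < 0 for every u ∈ (0,1), and ∂R/∂w(u, w(u)) ≤ χ(u) < 0 for every u ∈ [0,1]. -/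

import Mathlib

open Set

/-- existence, uniqueness and properties of the curve `u ↦ w(u)` of
zeros of `R(u,·)` on `[0,1]` (Lemma 3.2 of the paper restricted to `[0,1]`).
Here `Rw u w` denotes the partial derivative `∂R/∂w(u,w)` on `(−∞,0]`, and
`χ(u) = Rw u 0`. -/
theorem exists_unique_zero_curve (R Rw : ℝ → ℝ → ℝ)
    (hcont : ContinuousOn (Function.uncurry R) (Icc (0 : ℝ) 1 ×ˢ Iic (0 : ℝ)))
    (hconv : ∀ u ∈ Icc (0 : ℝ) 1, ConvexOn ℝ (Iic (0 : ℝ)) (R u))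
    (hdiff : ∀ u ∈ Icc (0 : ℝ) 1, ∀ v ∈ Iic (0 : ℝ),
      HasDerivWithinAt (R u) (Rw u v) (Iic (0 : ℝ)) v)
    (hstrict : StrictConvexOn ℝ (Icc (0 : ℝ) 1) (fun u => R u 0))
    (hR00 : R 0 0 = 0) (hR10 : R 1 0 = 0)
    (hχconv : ConvexOn ℝ (Icc (0 : ℝ) 1) (fun u => Rw u 0))
    (hχ0 : Rw 0 0 < 0) (hχ1 : Rw 1 0 < 0) :
    ∃ w : ℝ → ℝ,
      (∀ u ∈ Icc (0 : ℝ) 1, w u ≤ 0 ∧ R u (w u) = 0) ∧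
      (∀ w' : ℝ → ℝ, (∀ u ∈ Icc (0 : ℝ) 1, w' u ≤ 0 ∧ R u (w' u) = 0) →
        ∀ u ∈ Icc (0 : ℝ) 1, w' u = w u) ∧
      ContinuousOn w (Icc (0 : ℝ) 1) ∧
      w 0 = 0 ∧ w 1 = 0 ∧
      (∀ u ∈ Ioo (0 : ℝ) 1, w u < 0) ∧
      (∀ u ∈ Icc (0 : ℝ) 1, Rw u (w u) ≤ Rw u 0 ∧ Rw u 0 < 0) := by
  have h0m : (0:ℝ) ∈ Icc (0:ℝ) 1 := ⟨le_refl _, zero_le_one⟩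
  have h1m : (1:ℝ) ∈ Icc (0:ℝ) 1 := ⟨zero_le_one, le_refl _⟩
  -- χ is negative on [0,1]
  have hχ : ∀ u ∈ Icc (0:ℝ) 1, Rw u 0 < 0 := by
    intro u hu
    have h := hχconv.le_on_segment h0m h1m
      (by rwa [segment_eq_Icc (zero_le_one : (0:ℝ) ≤ 1)])
    exact lt_of_le_of_lt h (max_lt hχ0 hχ1)
  -- continuity of slices
  have hRc : ∀ c : ℝ, c ≤ 0 → ContinuousOn (fun u => R u c) (Icc (0:ℝ) 1) := by
    intro c hc
    exact hcont.comp ((continuous_id.prodMk continuous_const).continuousOn)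
      (fun u hu => ⟨hu, hc⟩)
  have hRcont : ∀ u ∈ Icc (0:ℝ) 1, ContinuousOn (R u) (Iic (0:ℝ)) := by
    intro u hu
    exact hcont.comp ((continuous_const.prodMk continuous_id).continuousOn)
      (fun v hv => ⟨hu, hv⟩)
  -- derivative monotonicity from convexity
  have hC1 : ∀ u ∈ Icc (0:ℝ) 1, ∀ v ∈ Iic (0:ℝ), Rw u v ≤ Rw u 0 := by
    intro u hu v hv
    rcases (mem_Iic.mp hv).lt_or_eq with h | h
    · have h1 := (hconv u hu).le_slope_of_hasDerivWithinAt hv self_mem_Iic h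
        (hdiff u hu v hv)
      have h2 := (hconv u hu).slope_le_of_hasDerivWithinAt hv self_mem_Iic h
        (hdiff u hu 0 self_mem_Iic)
      exact h1.trans h2
    · rw [h]
  -- R u is strictly decreasing on (-∞,0]
  have hanti : ∀ u ∈ Icc (0:ℝ) 1, StrictAntiOn (R u) (Iic (0:ℝ)) := by
    intro u hu
    refine strictAntiOn_of_hasDerivWithinAt_neg (convex_Iic 0) (hRcont u hu)
      (f' := Rw u) ?_ ?_
    · intro x hx
      rw [interior_Iic] at hx ⊢
      exact (hdiff u hu x (mem_Iic.mpr hx.le)).mono Iio_subset_Iic_self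
    · intro x hx
      rw [interior_Iic] at hx
      exact lt_of_le_of_lt (hC1 u hu x (mem_Iic.mpr hx.le)) (hχ u hu)
  -- tangent line bound at 0
  have htang : ∀ u ∈ Icc (0:ℝ) 1, ∀ v ∈ Iic (0:ℝ), R u 0 + Rw u 0 * v ≤ R u v := by
    intro u hu v hv
    rcases (mem_Iic.mp hv).lt_or_eq with h | h
    · have hs := (hconv u hu).slope_le_of_hasDerivWithinAt hv self_mem_Iic h
        (hdiff u hu 0 self_mem_Iic)
      rw [slope_def_field] at hs
      rw [div_le_iff₀ (by linarith : (0:ℝ) < 0 - v)] at hs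
      nlinarith
    · rw [h]; simp
  -- R u 0 < 0 on the open interval
  have hRu0 : ∀ u ∈ Ioo (0:ℝ) 1, R u 0 < 0 := by
    intro u hu
    have h := hstrict.2 h0m h1m (by norm_num)
      (by linarith [hu.2] : (0:ℝ) < 1 - u) hu.1 (by ring)
    simpa [smul_eq_mul, hR00, hR10] using h
  -- existence of a zero
  have hex : ∀ u ∈ Icc (0:ℝ) 1, ∃ v, v ≤ 0 ∧ R u v = 0 := by
    intro u hu
    rcases eq_or_lt_of_le hu.1 with h0 | h0
    · exact ⟨0, le_refl _, by rw [← h0]; exact hR00⟩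
    rcases eq_or_lt_of_le hu.2 with h1 | h1
    · exact ⟨0, le_refl _, by rw [h1]; exact hR10⟩
    have huI : u ∈ Ioo (0:ℝ) 1 := ⟨h0, h1⟩
    have hχu := hχ u hu
    have hR0 := hRu0 u huI
    set w0 : ℝ := R u 0 / (- Rw u 0) with hw0
    have hw0neg : w0 < 0 := div_neg_of_neg_of_pos hR0 (by linarith)
    have hne : Rw u 0 ≠ 0 := hχu.ne
    have hmul : Rw u 0 * w0 = - R u 0 := by
      rw [hw0]; field_simp
    have hw0R : 0 ≤ R u w0 := by
      have ht := htang u hu w0 hw0neg.le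
      rw [hmul] at ht; linarith
    have hIVT := intermediate_value_Icc' hw0neg.le
      ((hRcont u hu).mono Icc_subset_Iic_self)
    obtain ⟨x, hxmem, hx⟩ := hIVT (⟨hR0.le, hw0R⟩ : (0:ℝ) ∈ Icc (R u 0) (R u w0))
    exact ⟨x, hxmem.2, hx⟩
  choose! v hv0 hvz using hex
  -- uniqueness
  have huniq : ∀ u ∈ Icc (0:ℝ) 1, ∀ x, x ≤ 0 → R u x = 0 → x = v u := by
    intro u hu x hx hRx
    exact (hanti u hu).injOn hx (hv0 u hu) (by rw [hRx, hvz u hu])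
  -- continuity of v
  have hwcont : ContinuousOn v (Icc (0:ℝ) 1) := by
    intro u₀ hu₀
    refine tendsto_order.2 ⟨?_, ?_⟩
    · intro a ha
      have haneg : a < 0 := lt_of_lt_of_le ha (hv0 u₀ hu₀)
      have hpos : 0 < R u₀ a := by
        have h := hanti u₀ hu₀ haneg.le (hv0 u₀ hu₀) ha
        rwa [hvz u₀ hu₀] at h
      have hev := (hRc a haneg.le u₀ hu₀) (Ioi_mem_nhds hpos)
      filter_upwards [hev, self_mem_nhdsWithin] with u hu hmem
      simp only [mem_preimage, mem_Ioi] at hu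
      by_contra h
      push_neg at h
      rcases h.lt_or_eq with h' | h'
      · have hh := hanti u hmem (hv0 u hmem) haneg.le h'
        rw [hvz u hmem] at hh; linarith
      · rw [← h', hvz u hmem] at hu; linarith
    · intro b hb
      rcases le_or_gt b 0 with hb0 | hb0
      · have hneg : R u₀ b < 0 := by
          have h := hanti u₀ hu₀ (hv0 u₀ hu₀) hb0 hb
          rwa [hvz u₀ hu₀] at h
        have hev := (hRc b hb0 u₀ hu₀) (Iio_mem_nhds hneg)
        filter_upwards [hev, self_mem_nhdsWithin] with u hu hmem
        simp only [mem_preimage, mem_Iio] at hu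
        by_contra h
        push_neg at h
        rcases h.lt_or_eq with h' | h'
        · have hh := hanti u hmem hb0 (hv0 u hmem) h'
          rw [hvz u hmem] at hh; linarith
        · rw [h', hvz u hmem] at hu; linarith
      · filter_upwards [self_mem_nhdsWithin] with u hmem
        exact lt_of_le_of_lt (hv0 u hmem) hb0
  refine ⟨v, fun u hu => ⟨hv0 u hu, hvz u hu⟩, ?_, hwcont, ?_, ?_, ?_, ?_⟩
  · intro w' hw' u hu
    exact huniq u hu (w' u) (hw' u hu).1 (hw' u hu).2
  · exact (huniq 0 h0m 0 le_rfl hR00).symm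
  · exact (huniq 1 h1m 0 le_rfl hR10).symm
  · intro u hu
    have hm : u ∈ Icc (0:ℝ) 1 := ⟨hu.1.le, hu.2.le⟩
    rcases (hv0 u hm).lt_or_eq with h | h
    · exact h
    · exfalso
      have hz := hvz u hm
      rw [h] at hz
      exact (hRu0 u hu).ne hz
  · intro u hu
    exact ⟨hC1 u hu (v u) (hv0 u hu), hχ u hu⟩
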